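/- With the twisted symmetrization operators Ψ_r as above and A_r = Im(Ψ_r), there exists a unique K-linear map m_{r,s} : A_r ⊗ A_s → A_{r+s} such that m_{r,s}(Ψ_r(P) ⊗ Ψ_s(Q)) = Ψ_{r+s}(P(z_1,...,z_r)·Q(z_{r+1},...,z_{r+s})) for all Laurent polynomials P, Q; moreover these maps endow A = K ⊕ ⊕_{r≥1} A_r with the structure of an associative graded algebra. -/

import Mathlib

open scoped TensorProduct

/-- Laurent polynomials `K[z₁^{±1},…,z_r^{±1}]` as the algebra of exponent vectors. -/
abbrev Laur (K : Type) [Field K] (r : ℕ) : Type :=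
  AddMonoidAlgebra K (Fin r → ℤ)

instance laurDomain (K : Type) [Field K] (r : ℕ) : IsDomain (Laur K r) := by
  constructor

/-- The fraction field `K(z₁,…,z_r)` of the Laurent polynomial ring. -/
abbrev FracLaur (K : Type) [Field K] (r : ℕ) : Type _ := FractionRing (Laur K r)

/-- Permutation of exponent vectors. -/
def permExp {r : ℕ} (γ : Equiv.Perm (Fin r)) : (Fin r → ℤ) ≃+ (Fin r → ℤ) where
  toFun v := v ∘ γ.symm
  invFun v := v ∘ γ
  left_inv v := by funext i; simp
  right_inv v := by funext i; simp
  map_add' v w := rfl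

/-- The action of `γ ∈ S_r` on Laurent polynomials, permuting the variables. -/
noncomputable def permLaur (K : Type) [Field K] {r : ℕ} (γ : Equiv.Perm (Fin r)) :
    Laur K r ≃ₐ[K] Laur K r :=
  AddMonoidAlgebra.domCongr K K (permExp γ)

/-- The monomial `z^v`. -/
noncomputable def mono (K : Type) [Field K] {r : ℕ} (v : Fin r → ℤ) : Laur K r :=
  AddMonoidAlgebra.single v 1

/-- The numerator `∏_{i<j} (1-σ z_i/z_j)(1-σ̄ z_i/z_j)(1-(σσ̄)⁻¹ z_i/z_j)` of the
multiplier `∏_{i<j} ζ̃(z_i/z_j)`. -/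
noncomputable def zetaNum (K : Type) [Field K] (σ σb : K) (r : ℕ) : Laur K r :=
  ∏ p ∈ Finset.univ.filter (fun p : Fin r × Fin r => p.1 < p.2),
    ((1 - algebraMap K (Laur K r) σ * mono K (Pi.single p.1 1 - Pi.single p.2 1)) *
     (1 - algebraMap K (Laur K r) σb * mono K (Pi.single p.1 1 - Pi.single p.2 1)) *
     (1 - algebraMap K (Laur K r) (σ * σb)⁻¹ *
        mono K (Pi.single p.1 1 - Pi.single p.2 1)))

/-- The denominator `∏_{i<j} (1 - z_i/z_j)` of the multiplier `∏_{i<j} ζ̃(z_i/z_j)`. -/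
noncomputable def zetaDen (K : Type) [Field K] (r : ℕ) : Laur K r :=
  ∏ p ∈ Finset.univ.filter (fun p : Fin r × Fin r => p.1 < p.2),
    (1 - mono K (Pi.single p.1 1 - Pi.single p.2 1))

/-- The twisted symmetrization operator
`Ψ_r(P) = Σ_{γ ∈ S_r} γ·(∏_{i<j} ζ̃(z_i/z_j) · P)`, computed in the fraction field
`K(z₁,…,z_r)`. -/
noncomputable def Psi (K : Type) [Field K] (σ σb : K) (r : ℕ) (P : Laur K r) :
    FracLaur K r :=
  ∑ γ : Equiv.Perm (Fin r),
    algebraMap (Laur K r) (FracLaur K r) (permLaur K γ (zetaNum K σ σb r * P)) /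
      algebraMap (Laur K r) (FracLaur K r) (permLaur K γ (zetaDen K r))

/-- `A_r = Im Ψ_r`, as a `K`-subspace of the fraction field. -/
noncomputable def Amod (K : Type) [Field K] (σ σb : K) (r : ℕ) :
    Submodule K (FracLaur K r) :=
  Submodule.span K (Set.range (Psi K σ σb r))

/-- `Ψ_r(P)` as an element of `A_r`. -/
noncomputable def psiEl (K : Type) [Field K] (σ σb : K) (r : ℕ) (P : Laur K r) :
    Amod K σ σb r :=
  ⟨Psi K σ σb r P, Submodule.subset_span ⟨P, rfl⟩⟩

/-- Extension of exponent vectors by zero: the first `r` of `r+s` variables. -/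
def extL (r s : ℕ) : (Fin r → ℤ) →+ (Fin (r + s) → ℤ) where
  toFun v k := if h : (k : ℕ) < r then v ⟨k, h⟩ else 0
  map_zero' := by funext k; by_cases h : (k : ℕ) < r <;> simp [h]
  map_add' v w := by funext k; by_cases h : (k : ℕ) < r <;> simp [h]

/-- Extension of exponent vectors by zero: the last `s` of `r+s` variables. -/
def extR (r s : ℕ) : (Fin s → ℤ) →+ (Fin (r + s) → ℤ) where
  toFun v k := if h : r ≤ (k : ℕ) then v ⟨(k : ℕ) - r, by omega⟩ else 0
  map_zero' := by funext k; by_cases h : r ≤ (k : ℕ) <;> simp [h]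
  map_add' v w := by funext k; by_cases h : r ≤ (k : ℕ) <;> simp [h]

/-- `i_{r,s}` on the first factor: `P(z₁,…,z_r) ↦ P(z₁,…,z_r)` in `r+s` variables. -/
noncomputable def embL (K : Type) [Field K] (r s : ℕ) : Laur K r →ₐ[K] Laur K (r + s) :=
  AddMonoidAlgebra.mapDomainAlgHom K K (extL r s)

/-- `i_{r,s}` on the second factor: `Q(z₁,…,z_s) ↦ Q(z_{r+1},…,z_{r+s})`. -/
noncomputable def embR (K : Type) [Field K] (r s : ℕ) : Laur K s →ₐ[K] Laur K (r + s) :=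
  AddMonoidAlgebra.mapDomainAlgHom K K (extR r s)

/-- The property characterizing the shuffle multiplication
`m_{r,s} : A_r ⊗ A_s → A_{r+s}`: the diagram
`m_{r,s}(Ψ_r(P) ⊗ Ψ_s(Q)) = Ψ_{r+s}(P(z₁,…,z_r)·Q(z_{r+1},…,z_{r+s}))` commutes. -/
def MulProp (K : Type) [Field K] (σ σb : K) (r s : ℕ)
    (m : Amod K σ σb r ⊗[K] Amod K σ σb s →ₗ[K] Amod K σ σb (r + s)) : Prop :=
  ∀ (P : Laur K r) (Q : Laur K s),
    m (psiEl K σ σb r P ⊗ₜ[K] psiEl K σ σb s Q)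
      = psiEl K σ σb (r + s) (embL K r s P * embR K r s Q)

section ShuffleDev
open Equiv Finset
set_option synthInstance.maxHeartbeats 1000000
set_option maxHeartbeats 2000000
variable (K : Type) [Field K]
noncomputable local instance fracLaurField (r : ℕ) : Field (FracLaur K r) := inferInstance
noncomputable local instance fracLaurAlgebra (r : ℕ) : Algebra (Laur K r) (FracLaur K r) := inferInstance
local instance fracLaurIsFrac (r : ℕ) : IsFractionRing (Laur K r) (FracLaur K r) := inferInstance
noncomputable local instance fracLaurAlgK (r : ℕ) : Algebra K (FracLaur K r) := inferInstance
local instance fracLaurTower (r : ℕ) : IsScalarTower K (Laur K r) (FracLaur K r) := inferInstance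

/-- Shorthand for the algebra map to the fraction field. -/
noncomputable abbrev toF (r : ℕ) : Laur K r →+* FracLaur K r :=
  algebraMap (Laur K r) (FracLaur K r)

lemma toF_injective (r : ℕ) : Function.Injective (toF K r) :=
  IsFractionRing.injective (Laur K r) (FracLaur K r)

lemma permLaur_single {r : ℕ} (γ : Equiv.Perm (Fin r)) (v : Fin r → ℤ) (c : K) :
    permLaur K γ (AddMonoidAlgebra.single v c)
      = AddMonoidAlgebra.single (v ∘ γ.symm) c :=
  AddMonoidAlgebra.domCongr_single _ _ _

lemma permLaur_mul {r : ℕ} (γ δ : Equiv.Perm (Fin r)) (x : Laur K r) :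
    permLaur K (γ * δ) x = permLaur K γ (permLaur K δ x) := by
  have h : (permLaur K (γ * δ)).toAlgHom
      = ((permLaur K γ).toAlgHom.comp (permLaur K δ).toAlgHom) := by
    refine AddMonoidAlgebra.algHom_ext ?_ (Subsingleton.elim _ _)
    intro v
    simp only [AlgEquiv.toAlgHom_eq_coe, AlgHom.coe_coe, AlgHom.coe_comp, Function.comp_apply,
      permLaur_single]
    show permLaur K (γ * δ) (AddMonoidAlgebra.single v 1)
      = permLaur K γ (permLaur K δ (AddMonoidAlgebra.single v 1))
    rw [permLaur_single, permLaur_single, permLaur_single]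
    rfl
  exact congrArg (fun (f : Laur K r →ₐ[K] Laur K r) => f x) h

/-- The permutation action extended to the fraction field. -/
noncomputable def permFrac {r : ℕ} (γ : Equiv.Perm (Fin r)) :
    FracLaur K r →+* FracLaur K r :=
  IsFractionRing.lift (g := (toF K r).comp (permLaur K γ).toAlgHom.toRingHom)
    ((toF_injective K r).comp (permLaur K γ).injective)

lemma permFrac_toF {r : ℕ} (γ : Equiv.Perm (Fin r)) (x : Laur K r) :
    permFrac K γ (toF K r x) = toF K r (permLaur K γ x) :=
  IsFractionRing.lift_algebraMap _ _

lemma permFrac_permFrac {r : ℕ} (γ δ : Equiv.Perm (Fin r)) (x : FracLaur K r) :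
    permFrac K γ (permFrac K δ x) = permFrac K (γ * δ) x := by
  have h : (permFrac K γ).comp (permFrac K δ) = permFrac K (γ * δ) := by
    apply IsLocalization.ringHom_ext (nonZeroDivisors (Laur K r))
    refine RingHom.ext fun y => ?_
    simp [RingHom.comp_apply, permFrac_toF, permLaur_mul]
  exact (DFunLike.congr_fun h x)

lemma embL_injective (r s : ℕ) : Function.Injective (embL K r s) := by
  have hext : Function.Injective (extL r s) := by
    intro v w h
    funext i
    have := congrFun h ⟨i.1, lt_of_lt_of_le i.2 (Nat.le_add_right r s)⟩
    simpa [extL, i.2] using this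
  intro x y h
  simpa [embL, AddMonoidAlgebra.mapDomainAlgHom_apply] using
    AddMonoidAlgebra.mapDomain_injective hext (by simpa [embL, AddMonoidAlgebra.mapDomainAlgHom_apply] using h)

lemma embR_injective (r s : ℕ) : Function.Injective (embR K r s) := by
  have hext : Function.Injective (extR r s) := by
    intro v w h
    funext i
    have := congrFun h ⟨r + i.1, by omega⟩
    simpa [extR] using this
  intro x y h
  simpa [embR, AddMonoidAlgebra.mapDomainAlgHom_apply] using
    AddMonoidAlgebra.mapDomain_injective hext (by simpa [embR, AddMonoidAlgebra.mapDomainAlgHom_apply] using h)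

/-- Embedding of the first-factor fraction field. -/
noncomputable def eL (r s : ℕ) : FracLaur K r →+* FracLaur K (r + s) :=
  IsFractionRing.lift (g := (toF K (r + s)).comp (embL K r s).toRingHom)
    ((toF_injective K (r + s)).comp (embL_injective K r s))

/-- Embedding of the second-factor fraction field. -/
noncomputable def eR (r s : ℕ) : FracLaur K s →+* FracLaur K (r + s) :=
  IsFractionRing.lift (g := (toF K (r + s)).comp (embR K r s).toRingHom)
    ((toF_injective K (r + s)).comp (embR_injective K r s))

lemma eL_toF (r s : ℕ) (x : Laur K r) : eL K r s (toF K r x) = toF K (r+s) (embL K r s x) :=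
  IsFractionRing.lift_algebraMap _ _

lemma eR_toF (r s : ℕ) (x : Laur K s) : eR K r s (toF K s x) = toF K (r+s) (embR K r s x) :=
  IsFractionRing.lift_algebraMap _ _


lemma single_sub_comp_symm {n : ℕ} (γ : Equiv.Perm (Fin n)) (i j : Fin n) :
    ((Pi.single i (1:ℤ) : Fin n → ℤ) - Pi.single j 1) ∘ γ.symm
      = (Pi.single (γ i) (1:ℤ) : Fin n → ℤ) - Pi.single (γ j) 1 := by
  funext k
  simp only [Function.comp_apply, Pi.sub_apply, Pi.single_apply]
  have h1 : (γ.symm k = i) ↔ (k = γ i) := by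
    rw [Equiv.symm_apply_eq]
  have h2 : (γ.symm k = j) ↔ (k = γ j) := by
    rw [Equiv.symm_apply_eq]
  simp [h1, h2]

lemma permLaur_mono {n : ℕ} (γ : Equiv.Perm (Fin n)) (i j : Fin n) :
    permLaur K γ (mono K (Pi.single i 1 - Pi.single j 1))
      = mono K (Pi.single (γ i) 1 - Pi.single (γ j) 1) := by
  rw [mono, permLaur_single, single_sub_comp_symm]; rfl

/-- One linear factor `1 - c·z_i/z_j`. -/
noncomputable def linFactor {n : ℕ} (c : K) (p : Fin n × Fin n) : Laur K n :=
  1 - algebraMap K (Laur K n) c * mono K (Pi.single p.1 1 - Pi.single p.2 1)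

/-- The set of increasing pairs. -/
def ltSet (n : ℕ) : Finset (Fin n × Fin n) :=
  Finset.univ.filter fun p : Fin n × Fin n => p.1 < p.2

/-- Product of linear factors over a set of pairs. -/
noncomputable def Lprod {n : ℕ} (c : K) (S : Finset (Fin n × Fin n)) : Laur K n :=
  ∏ p ∈ S, linFactor K c p

lemma zetaNum_eq (σ σb : K) (n : ℕ) :
    zetaNum K σ σb n = Lprod K σ (ltSet n) * Lprod K σb (ltSet n) * Lprod K (σ*σb)⁻¹ (ltSet n) := by
  rw [zetaNum, Lprod, Lprod, Lprod, ← Finset.prod_mul_distrib, ← Finset.prod_mul_distrib]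
  rfl

lemma zetaDen_eq (n : ℕ) : zetaDen K n = Lprod K 1 (ltSet n) := by
  rw [zetaDen, Lprod]
  apply Finset.prod_congr rfl
  intro p _
  simp only [linFactor, map_one, one_mul]

lemma permLaur_linFactor {n : ℕ} (γ : Equiv.Perm (Fin n)) (c : K) (p : Fin n × Fin n) :
    permLaur K γ (linFactor K c p) = linFactor K c (γ p.1, γ p.2) := by
  simp only [linFactor, map_sub, map_one, map_mul, AlgEquiv.commutes, permLaur_mono]

lemma permLaur_Lprod {n : ℕ} (γ : Equiv.Perm (Fin n)) (c : K) (S : Finset (Fin n × Fin n)) :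
    permLaur K γ (Lprod K c S) = ∏ p ∈ S, linFactor K c (γ p.1, γ p.2) := by
  rw [Lprod, map_prod]
  exact Finset.prod_congr rfl fun p _ => permLaur_linFactor K γ c p

lemma permLaur_Lprod_eq {n : ℕ} (γ : Equiv.Perm (Fin n)) (c : K) (S : Finset (Fin n × Fin n))
    (h1 : ∀ p ∈ S, (γ p.1, γ p.2) ∈ S) (h2 : ∀ p ∈ S, (γ.symm p.1, γ.symm p.2) ∈ S) :
    permLaur K γ (Lprod K c S) = Lprod K c S := by
  rw [permLaur_Lprod, Lprod]
  exact Finset.prod_nbij' (fun p => (γ p.1, γ p.2)) (fun p => (γ.symm p.1, γ.symm p.2))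
    h1 h2 (fun p _ => by simp) (fun p _ => by simp) (fun p _ => rfl)

/-- `S_r` inside `S_{r+s}` acting on the first `r` letters. -/
noncomputable def iotaL (r s : ℕ) : Equiv.Perm (Fin r) →* Equiv.Perm (Fin (r + s)) where
  toFun α := finSumFinEquiv.permCongr (Equiv.Perm.sumCongrHom _ _ (α, 1))
  map_one' := by
    ext k
    simp [Equiv.permCongr_apply]
  map_mul' α β := by
    ext k
    simp [Equiv.permCongr_apply, Equiv.Perm.mul_apply]

/-- `S_s` inside `S_{r+s}` acting on the last `s` letters. -/
noncomputable def iotaR (r s : ℕ) : Equiv.Perm (Fin s) →* Equiv.Perm (Fin (r + s)) where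
  toFun β := finSumFinEquiv.permCongr (Equiv.Perm.sumCongrHom _ _ (1, β))
  map_one' := by
    ext k
    simp [Equiv.permCongr_apply]
  map_mul' α β := by
    ext k
    simp [Equiv.permCongr_apply, Equiv.Perm.mul_apply]

lemma iotaL_castAdd {r s : ℕ} (α : Equiv.Perm (Fin r)) (i : Fin r) :
    iotaL r s α (Fin.castAdd s i) = Fin.castAdd s (α i) := by
  simp [iotaL, Equiv.permCongr_apply, Equiv.Perm.sumCongrHom]

lemma iotaL_natAdd {r s : ℕ} (α : Equiv.Perm (Fin r)) (j : Fin s) :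
    iotaL r s α (Fin.natAdd r j) = Fin.natAdd r j := by
  simp [iotaL, Equiv.permCongr_apply, Equiv.Perm.sumCongrHom]

lemma iotaR_castAdd {r s : ℕ} (β : Equiv.Perm (Fin s)) (i : Fin r) :
    iotaR r s β (Fin.castAdd s i) = Fin.castAdd s i := by
  simp [iotaR, Equiv.permCongr_apply, Equiv.Perm.sumCongrHom]

lemma iotaR_natAdd {r s : ℕ} (β : Equiv.Perm (Fin s)) (j : Fin s) :
    iotaR r s β (Fin.natAdd r j) = Fin.natAdd r (β j) := by
  simp [iotaR, Equiv.permCongr_apply, Equiv.Perm.sumCongrHom]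

lemma iotaL_val_lt {r s : ℕ} (α : Equiv.Perm (Fin r)) (k : Fin (r + s)) :
    ((iotaL r s α k : Fin (r+s)) : ℕ) < r ↔ (k : ℕ) < r := by
  induction k using Fin.addCases with
  | left i => simp [iotaL_castAdd, i.2, (α i).2]
  | right j => simp [iotaL_natAdd]

lemma iotaR_val_lt {r s : ℕ} (β : Equiv.Perm (Fin s)) (k : Fin (r + s)) :
    ((iotaR r s β k : Fin (r+s)) : ℕ) < r ↔ (k : ℕ) < r := by
  induction k using Fin.addCases with
  | left i => simp [iotaR_castAdd, i.2]
  | right j => simp [iotaR_natAdd]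


def LLset (r s : ℕ) : Finset (Fin (r+s) × Fin (r+s)) :=
  Finset.univ.filter fun p => (p.2 : ℕ) < r ∧ p.1 < p.2
def RRset (r s : ℕ) : Finset (Fin (r+s) × Fin (r+s)) :=
  Finset.univ.filter fun p => r ≤ (p.1 : ℕ) ∧ p.1 < p.2
def crossSet (r s : ℕ) : Finset (Fin (r+s) × Fin (r+s)) :=
  Finset.univ.filter fun p => (p.1 : ℕ) < r ∧ r ≤ (p.2 : ℕ)

lemma ltSet_split (r s : ℕ) :
    ltSet (r+s) = (LLset r s ∪ RRset r s) ∪ crossSet r s := by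
  ext p
  simp only [ltSet, LLset, RRset, crossSet, Finset.mem_filter, Finset.mem_union,
    Finset.mem_univ, true_and, Fin.lt_def]
  omega

lemma Lprod_ltSet_split (c : K) (r s : ℕ) :
    Lprod K c (ltSet (r+s))
      = Lprod K c (LLset r s) * Lprod K c (RRset r s) * Lprod K c (crossSet r s) := by
  rw [Lprod, ltSet_split, Finset.prod_union, Finset.prod_union]
  · rfl
  · rw [Finset.disjoint_left]
    intro p hp hq
    simp only [LLset, RRset, Finset.mem_filter, Fin.lt_def] at hp hq
    omega
  · rw [Finset.disjoint_left]
    intro p hp hq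
    simp only [LLset, RRset, crossSet, Finset.mem_union, Finset.mem_filter, Fin.lt_def] at hp hq
    omega

lemma extL_castAdd (r s : ℕ) (v : Fin r → ℤ) (i : Fin r) :
    extL r s v (Fin.castAdd s i) = v i := by
  simp [extL]

lemma extL_natAdd (r s : ℕ) (v : Fin r → ℤ) (j : Fin s) :
    extL r s v (Fin.natAdd r j) = 0 := by
  simp [extL]

lemma extR_castAdd (r s : ℕ) (v : Fin s → ℤ) (i : Fin r) :
    extR r s v (Fin.castAdd s i) = 0 := by
  simp [extR, Nat.not_le.mpr i.2]

lemma extR_natAdd (r s : ℕ) (v : Fin s → ℤ) (j : Fin s) :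
    extR r s v (Fin.natAdd r j) = v j := by
  simp [extR]

lemma extL_pi_single (r s : ℕ) (i : Fin r) :
    extL r s (Pi.single i (1:ℤ)) = Pi.single (Fin.castAdd s i) 1 := by
  funext k
  induction k using Fin.addCases with
  | left i' =>
      rw [extL_castAdd]
      simp [Pi.single_apply, Fin.ext_iff]
  | right j =>
      rw [extL_natAdd]
      have : Fin.natAdd r j ≠ Fin.castAdd s i := by
        simp [Fin.ext_iff]; omega
      simp [Pi.single_apply, this]

lemma extR_pi_single (r s : ℕ) (j : Fin s) :
    extR r s (Pi.single j (1:ℤ)) = Pi.single (Fin.natAdd r j) 1 := by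
  funext k
  induction k using Fin.addCases with
  | left i' =>
      rw [extR_castAdd]
      have : Fin.castAdd s i' ≠ Fin.natAdd r j := by
        simp [Fin.ext_iff]; omega
      simp [Pi.single_apply, this]
  | right j' =>
      rw [extR_natAdd]
      simp [Pi.single_apply, Fin.ext_iff]

lemma embL_mono (r s : ℕ) (v : Fin r → ℤ) :
    embL K r s (mono K v) = mono K (extL r s v) := by
  simp [embL, mono, AddMonoidAlgebra.mapDomainAlgHom_apply, Finsupp.mapDomain_single]

lemma embR_mono (r s : ℕ) (v : Fin s → ℤ) :
    embR K r s (mono K v) = mono K (extR r s v) := by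
  simp [embR, mono, AddMonoidAlgebra.mapDomainAlgHom_apply, Finsupp.mapDomain_single]

lemma embL_linFactor (r s : ℕ) (c : K) (p : Fin r × Fin r) :
    embL K r s (linFactor K c p)
      = linFactor K c (Fin.castAdd s p.1, Fin.castAdd s p.2) := by
  simp only [linFactor, map_sub, map_one, map_mul, AlgHom.commutes, embL_mono, map_sub,
    extL_pi_single]

lemma embR_linFactor (r s : ℕ) (c : K) (p : Fin s × Fin s) :
    embR K r s (linFactor K c p)
      = linFactor K c (Fin.natAdd r p.1, Fin.natAdd r p.2) := by
  simp only [linFactor, map_sub, map_one, map_mul, AlgHom.commutes, embR_mono, map_sub,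
    extR_pi_single]

lemma embL_Lprod (r s : ℕ) (c : K) :
    embL K r s (Lprod K c (ltSet r)) = Lprod K c (LLset r s) := by
  rw [Lprod, map_prod, Lprod]
  refine Finset.prod_bij (fun p _ => (Fin.castAdd s p.1, Fin.castAdd s p.2)) ?_ ?_ ?_ ?_
  · intro p hp
    simp only [ltSet, Finset.mem_filter, Fin.lt_def] at hp
    simp only [LLset, Finset.mem_filter, Finset.mem_univ, true_and, Fin.lt_def]
    exact ⟨p.2.2, hp.2⟩
  · intro p hp q hq h
    simp only [Prod.ext_iff, Fin.ext_iff, Fin.coe_castAdd] at h ⊢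
    exact h
  · intro q hq
    simp only [LLset, Finset.mem_filter, Finset.mem_univ, true_and, Fin.lt_def] at hq
    refine ⟨(⟨q.1.1, by omega⟩, ⟨q.2.1, by omega⟩), ?_, ?_⟩
    · simp only [ltSet, Finset.mem_filter, Finset.mem_univ, true_and, Fin.lt_def]
      exact hq.2
    · simp only [Prod.ext_iff, Fin.ext_iff, Fin.coe_castAdd]
      exact ⟨trivial, trivial⟩
  · intro p hp
    exact embL_linFactor K r s c p

lemma embR_Lprod (r s : ℕ) (c : K) :
    embR K r s (Lprod K c (ltSet s)) = Lprod K c (RRset r s) := by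
  rw [Lprod, map_prod, Lprod]
  refine Finset.prod_bij (fun p _ => (Fin.natAdd r p.1, Fin.natAdd r p.2)) ?_ ?_ ?_ ?_
  · intro p hp
    simp only [ltSet, Finset.mem_filter, Fin.lt_def] at hp
    simp only [RRset, Finset.mem_filter, Finset.mem_univ, true_and, Fin.lt_def, Fin.coe_natAdd]
    omega
  · intro p hp q hq h
    simp only [Prod.ext_iff, Fin.ext_iff, Fin.coe_natAdd] at h ⊢
    constructor <;> omega
  · intro q hq
    simp only [RRset, Finset.mem_filter, Finset.mem_univ, true_and, Fin.lt_def] at hq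
    refine ⟨(⟨q.1.1 - r, by omega⟩, ⟨q.2.1 - r, by omega⟩), ?_, ?_⟩
    · simp only [ltSet, Finset.mem_filter, Finset.mem_univ, true_and, Fin.lt_def]
      omega
    · simp only [Prod.ext_iff, Fin.ext_iff, Fin.coe_natAdd]
      omega
  · intro p hp
    exact embR_linFactor K r s c p

/-- Numerator of the cross-factor `∏_{i≤r<j} ζ̃(z_i/z_j)`. -/
noncomputable def crossNum (σ σb : K) (r s : ℕ) : Laur K (r+s) :=
  Lprod K σ (crossSet r s) * Lprod K σb (crossSet r s) * Lprod K (σ*σb)⁻¹ (crossSet r s)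

/-- Denominator of the cross-factor. -/
noncomputable def crossDen (r s : ℕ) : Laur K (r+s) :=
  Lprod K 1 (crossSet r s)

lemma zetaNum_split (σ σb : K) (r s : ℕ) :
    zetaNum K σ σb (r+s)
      = embL K r s (zetaNum K σ σb r) * embR K r s (zetaNum K σ σb s)
          * crossNum K σ σb r s := by
  rw [zetaNum_eq, zetaNum_eq, zetaNum_eq, crossNum, Lprod_ltSet_split, Lprod_ltSet_split,
    Lprod_ltSet_split, map_mul, map_mul, map_mul, map_mul, embL_Lprod, embL_Lprod, embL_Lprod,
    embR_Lprod, embR_Lprod, embR_Lprod]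
  ring

lemma zetaDen_split (r s : ℕ) :
    zetaDen K (r+s) = embL K r s (zetaDen K r) * embR K r s (zetaDen K s) * crossDen K r s := by
  rw [zetaDen_eq, zetaDen_eq, zetaDen_eq, crossDen, Lprod_ltSet_split, embL_Lprod, embR_Lprod]


lemma iotaL_symm (r s : ℕ) (α : Equiv.Perm (Fin r)) :
    (iotaL r s α).symm = iotaL r s α⁻¹ := by
  rw [map_inv]; rfl

lemma iotaR_symm (r s : ℕ) (β : Equiv.Perm (Fin s)) :
    (iotaR r s β).symm = iotaR r s β⁻¹ := by
  rw [map_inv]; rfl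

lemma permLaur_iotaL_cross (r s : ℕ) (α : Equiv.Perm (Fin r)) (c : K) :
    permLaur K (iotaL r s α) (Lprod K c (crossSet r s)) = Lprod K c (crossSet r s) := by
  apply permLaur_Lprod_eq
  · intro p hp
    simp only [crossSet, Finset.mem_filter, Finset.mem_univ, true_and] at hp ⊢
    rw [iotaL_val_lt, ← Nat.not_lt, iotaL_val_lt, Nat.not_lt]
    exact hp
  · intro p hp
    simp only [crossSet, Finset.mem_filter, Finset.mem_univ, true_and] at hp ⊢
    rw [iotaL_symm, iotaL_val_lt, ← Nat.not_lt, iotaL_val_lt, Nat.not_lt]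
    exact hp

lemma permLaur_iotaR_cross (r s : ℕ) (β : Equiv.Perm (Fin s)) (c : K) :
    permLaur K (iotaR r s β) (Lprod K c (crossSet r s)) = Lprod K c (crossSet r s) := by
  apply permLaur_Lprod_eq
  · intro p hp
    simp only [crossSet, Finset.mem_filter, Finset.mem_univ, true_and] at hp ⊢
    rw [iotaR_val_lt, ← Nat.not_lt, iotaR_val_lt, Nat.not_lt]
    exact hp
  · intro p hp
    simp only [crossSet, Finset.mem_filter, Finset.mem_univ, true_and] at hp ⊢
    rw [iotaR_symm, iotaR_val_lt, ← Nat.not_lt, iotaR_val_lt, Nat.not_lt]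
    exact hp

lemma permLaur_iotaL_crossNum (σ σb : K) (r s : ℕ) (α : Equiv.Perm (Fin r)) :
    permLaur K (iotaL r s α) (crossNum K σ σb r s) = crossNum K σ σb r s := by
  rw [crossNum, map_mul, map_mul, permLaur_iotaL_cross, permLaur_iotaL_cross,
    permLaur_iotaL_cross]

lemma permLaur_iotaR_crossNum (σ σb : K) (r s : ℕ) (β : Equiv.Perm (Fin s)) :
    permLaur K (iotaR r s β) (crossNum K σ σb r s) = crossNum K σ σb r s := by
  rw [crossNum, map_mul, map_mul, permLaur_iotaR_cross, permLaur_iotaR_cross,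
    permLaur_iotaR_cross]

lemma permLaur_iotaL_crossDen (r s : ℕ) (α : Equiv.Perm (Fin r)) :
    permLaur K (iotaL r s α) (crossDen K r s) = crossDen K r s :=
  permLaur_iotaL_cross K r s α 1

lemma permLaur_iotaR_crossDen (r s : ℕ) (β : Equiv.Perm (Fin s)) :
    permLaur K (iotaR r s β) (crossDen K r s) = crossDen K r s :=
  permLaur_iotaR_cross K r s β 1

lemma extL_comp_iotaL_symm (r s : ℕ) (α : Equiv.Perm (Fin r)) (v : Fin r → ℤ) :
    extL r s v ∘ (iotaL r s α).symm = extL r s (v ∘ α.symm) := by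
  funext k
  rw [iotaL_symm]
  induction k using Fin.addCases with
  | left i =>
      simp only [Function.comp_apply, iotaL_castAdd, extL_castAdd]
      rfl
  | right j =>
      simp only [Function.comp_apply, iotaL_natAdd, extL_natAdd]

lemma extR_comp_iotaL_symm (r s : ℕ) (α : Equiv.Perm (Fin r)) (w : Fin s → ℤ) :
    extR r s w ∘ (iotaL r s α).symm = extR r s w := by
  funext k
  rw [iotaL_symm]
  induction k using Fin.addCases with
  | left i =>
      simp only [Function.comp_apply, iotaL_castAdd, extR_castAdd]
  | right j =>
      simp only [Function.comp_apply, iotaL_natAdd]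

lemma extL_comp_iotaR_symm (r s : ℕ) (β : Equiv.Perm (Fin s)) (v : Fin r → ℤ) :
    extL r s v ∘ (iotaR r s β).symm = extL r s v := by
  funext k
  rw [iotaR_symm]
  induction k using Fin.addCases with
  | left i =>
      simp only [Function.comp_apply, iotaR_castAdd]
  | right j =>
      simp only [Function.comp_apply, iotaR_natAdd, extL_natAdd]

lemma extR_comp_iotaR_symm (r s : ℕ) (β : Equiv.Perm (Fin s)) (w : Fin s → ℤ) :
    extR r s w ∘ (iotaR r s β).symm = extR r s (w ∘ β.symm) := by
  funext k
  rw [iotaR_symm]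
  induction k using Fin.addCases with
  | left i =>
      simp only [Function.comp_apply, iotaR_castAdd, extR_castAdd]
  | right j =>
      simp only [Function.comp_apply, iotaR_natAdd, extR_natAdd]
      rfl

lemma permLaur_iotaL_embL (r s : ℕ) (α : Equiv.Perm (Fin r)) (x : Laur K r) :
    permLaur K (iotaL r s α) (embL K r s x) = embL K r s (permLaur K α x) := by
  have h : (permLaur K (iotaL r s α)).toAlgHom.comp (embL K r s)
      = (embL K r s).comp (permLaur K α).toAlgHom := by
    refine AddMonoidAlgebra.algHom_ext ?_ (Subsingleton.elim _ _)
    intro v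
    show permLaur K (iotaL r s α) (embL K r s (mono K v)) = embL K r s (permLaur K α (mono K v))
    rw [embL_mono, mono, permLaur_single, mono, permLaur_single, ← mono, ← mono, embL_mono,
      extL_comp_iotaL_symm]
  exact DFunLike.congr_fun h x

lemma permLaur_iotaL_embR (r s : ℕ) (α : Equiv.Perm (Fin r)) (y : Laur K s) :
    permLaur K (iotaL r s α) (embR K r s y) = embR K r s y := by
  have h : (permLaur K (iotaL r s α)).toAlgHom.comp (embR K r s) = embR K r s := by
    refine AddMonoidAlgebra.algHom_ext ?_ (Subsingleton.elim _ _)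
    intro w
    show permLaur K (iotaL r s α) (embR K r s (mono K w)) = embR K r s (mono K w)
    rw [embR_mono, mono, permLaur_single, extR_comp_iotaL_symm]
  exact DFunLike.congr_fun h y

lemma permLaur_iotaR_embL (r s : ℕ) (β : Equiv.Perm (Fin s)) (x : Laur K r) :
    permLaur K (iotaR r s β) (embL K r s x) = embL K r s x := by
  have h : (permLaur K (iotaR r s β)).toAlgHom.comp (embL K r s) = embL K r s := by
    refine AddMonoidAlgebra.algHom_ext ?_ (Subsingleton.elim _ _)
    intro v
    show permLaur K (iotaR r s β) (embL K r s (mono K v)) = embL K r s (mono K v)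
    rw [embL_mono, mono, permLaur_single, extL_comp_iotaR_symm]
  exact DFunLike.congr_fun h x

lemma permLaur_iotaR_embR (r s : ℕ) (β : Equiv.Perm (Fin s)) (y : Laur K s) :
    permLaur K (iotaR r s β) (embR K r s y) = embR K r s (permLaur K β y) := by
  have h : (permLaur K (iotaR r s β)).toAlgHom.comp (embR K r s)
      = (embR K r s).comp (permLaur K β).toAlgHom := by
    refine AddMonoidAlgebra.algHom_ext ?_ (Subsingleton.elim _ _)
    intro w
    show permLaur K (iotaR r s β) (embR K r s (mono K w)) = embR K r s (permLaur K β (mono K w))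
    rw [embR_mono, mono, permLaur_single, mono, permLaur_single, ← mono, ← mono, embR_mono,
      extR_comp_iotaR_symm]
  exact DFunLike.congr_fun h y

lemma iotaL_injective (r s : ℕ) : Function.Injective (iotaL r s) := by
  intro α β h
  ext i
  have h2 := congrArg (fun γ : Equiv.Perm (Fin (r+s)) => γ (Fin.castAdd s i)) h
  simp only [iotaL_castAdd] at h2
  have h3 := congrArg Fin.val h2
  simp only [Fin.coe_castAdd] at h3
  exact h3

lemma iotaR_injective (r s : ℕ) : Function.Injective (iotaR r s) := by
  intro α β h
  ext j
  have h2 := congrArg (fun γ : Equiv.Perm (Fin (r+s)) => γ (Fin.natAdd r j)) h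
  simp only [iotaR_natAdd] at h2
  have h3 := congrArg Fin.val h2
  simp only [Fin.coe_natAdd] at h3
  omega


lemma Psi_eq_sum (σ σb : K) (r : ℕ) (P : Laur K r) :
    Psi K σ σb r P = ∑ γ : Equiv.Perm (Fin r),
      permFrac K γ (toF K r (zetaNum K σ σb r * P) / toF K r (zetaDen K r)) := by
  rw [Psi]
  refine Finset.sum_congr rfl fun γ _ => ?_
  rw [map_div₀, permFrac_toF, permFrac_toF]

lemma Psi_kernel_left (σ σb : K) (r s : ℕ) (P : Laur K r) (Q : Laur K s)
    (hP : Psi K σ σb r P = 0) :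
    Psi K σ σb (r+s) (embL K r s P * embR K r s Q) = 0 := by
  classical
  have hnum : zetaNum K σ σb (r+s) * (embL K r s P * embR K r s Q)
      = crossNum K σ σb r s * embR K r s (zetaNum K σ σb s * Q)
          * embL K r s (zetaNum K σ σb r * P) := by
    rw [zetaNum_split, map_mul, map_mul]; ring
  have hden : zetaDen K (r+s)
      = crossDen K r s * embR K r s (zetaDen K s) * embL K r s (zetaDen K r) := by
    rw [zetaDen_split]; ring
  have hW : toF K (r+s) (zetaNum K σ σb (r+s) * (embL K r s P * embR K r s Q)) /
        toF K (r+s) (zetaDen K (r+s))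
      = (toF K (r+s) (crossNum K σ σb r s) / toF K (r+s) (crossDen K r s))
          * (toF K (r+s) (embR K r s (zetaNum K σ σb s * Q)) /
              toF K (r+s) (embR K r s (zetaDen K s)))
          * (toF K (r+s) (embL K r s (zetaNum K σ σb r * P)) /
              toF K (r+s) (embL K r s (zetaDen K r))) := by
    rw [hnum, hden, div_mul_div_comm, div_mul_div_comm, ← map_mul, ← map_mul, ← map_mul,
      ← map_mul]
  rw [Psi_eq_sum, hW]
  set H : Subgroup (Equiv.Perm (Fin (r+s))) := (iotaL r s).range with hH
  set C : FracLaur K (r+s) :=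
    toF K (r+s) (crossNum K σ σb r s) / toF K (r+s) (crossDen K r s) with hC
  set G : FracLaur K (r+s) :=
    toF K (r+s) (embR K r s (zetaNum K σ σb s * Q)) /
      toF K (r+s) (embR K r s (zetaDen K s)) with hG
  set EL : FracLaur K (r+s) := toF K (r+s) (embL K r s (zetaNum K σ σb r * P)) /
      toF K (r+s) (embL K r s (zetaDen K r)) with hEL
  have key : ∀ q : Equiv.Perm (Fin (r+s)) ⧸ H,
      ∑ γ ∈ univ.filter (fun γ => (QuotientGroup.mk γ : _ ⧸ H) = q),
        permFrac K γ (C * G * EL) = 0 := by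
    intro q
    have hbij : ∑ γ ∈ univ.filter (fun γ => (QuotientGroup.mk γ : _ ⧸ H) = q),
          permFrac K γ (C * G * EL)
        = ∑ α : Equiv.Perm (Fin r), permFrac K (q.out * iotaL r s α) (C * G * EL) := by
      refine (Finset.sum_bij (fun α _ => q.out * iotaL r s α) ?_ ?_ ?_ ?_).symm
      · intro α _
        simp only [Finset.mem_filter, Finset.mem_univ, true_and]
        rw [QuotientGroup.mk_mul_of_mem q.out (MonoidHom.mem_range.mpr ⟨α, rfl⟩),
          QuotientGroup.out_eq']
      · intro α _ β _ h
        exact iotaL_injective r s (mul_left_cancel h)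
      · intro γ hγ
        simp only [Finset.mem_filter, Finset.mem_univ, true_and] at hγ
        have hq : (QuotientGroup.mk q.out : _ ⧸ H) = QuotientGroup.mk γ := by
          rw [QuotientGroup.out_eq', hγ]
        obtain ⟨α, hα⟩ := MonoidHom.mem_range.mp (QuotientGroup.eq.mp hq)
        refine ⟨α, Finset.mem_univ α, ?_⟩
        show q.out * iotaL r s α = γ
        rw [hα, mul_inv_cancel_left]
      · intro α _; rfl
    rw [hbij]
    have hterm : ∀ α : Equiv.Perm (Fin r),
        permFrac K (q.out * iotaL r s α) (C * G * EL)
          = permFrac K q.out (C * G *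
              (toF K (r+s) (embL K r s (permLaur K α (zetaNum K σ σb r * P))) /
                toF K (r+s) (embL K r s (permLaur K α (zetaDen K r))))) := by
      intro α
      rw [← permFrac_permFrac]
      congr 1
      rw [map_mul, map_mul]
      congr 1
      · refine congrArg₂ (· * ·) ?_ ?_
        · rw [hC, map_div₀, permFrac_toF, permFrac_toF, permLaur_iotaL_crossNum,
            permLaur_iotaL_crossDen]
        · rw [hG, map_div₀, permFrac_toF, permFrac_toF, permLaur_iotaL_embR,
            permLaur_iotaL_embR]
      · rw [hEL, map_div₀, permFrac_toF, permFrac_toF, permLaur_iotaL_embL,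
          permLaur_iotaL_embL]
    calc ∑ α : Equiv.Perm (Fin r), permFrac K (q.out * iotaL r s α) (C * G * EL)
        = ∑ α : Equiv.Perm (Fin r), permFrac K q.out (C * G *
            (toF K (r+s) (embL K r s (permLaur K α (zetaNum K σ σb r * P))) /
              toF K (r+s) (embL K r s (permLaur K α (zetaDen K r))))) :=
          Finset.sum_congr rfl fun α _ => hterm α
      _ = permFrac K q.out (C * G * eL K r s (Psi K σ σb r P)) := by
          rw [← map_sum (permFrac K q.out), ← Finset.mul_sum]
          congr 2
          rw [Psi, map_sum (eL K r s)]
          refine Finset.sum_congr rfl fun α _ => ?_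
          rw [map_div₀, eL_toF, eL_toF]
      _ = 0 := by rw [hP, map_zero, mul_zero, map_zero]
  calc ∑ γ : Equiv.Perm (Fin (r+s)), permFrac K γ (C * G * EL)
      = ∑ q ∈ (univ : Finset (Equiv.Perm (Fin (r+s)) ⧸ H)),
          ∑ γ ∈ univ.filter (fun γ => (QuotientGroup.mk γ : _ ⧸ H) = q),
            permFrac K γ (C * G * EL) := by
        rw [Finset.sum_fiberwise_eq_sum_filter]
        rw [Finset.filter_true_of_mem (fun γ _ => Finset.mem_univ _)]
    _ = 0 := by
        rw [Finset.sum_congr rfl fun q _ => key q]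
        simp

lemma Psi_kernel_right (σ σb : K) (r s : ℕ) (P : Laur K r) (Q : Laur K s)
    (hQ : Psi K σ σb s Q = 0) :
    Psi K σ σb (r+s) (embL K r s P * embR K r s Q) = 0 := by
  classical
  have hnum : zetaNum K σ σb (r+s) * (embL K r s P * embR K r s Q)
      = crossNum K σ σb r s * embL K r s (zetaNum K σ σb r * P)
          * embR K r s (zetaNum K σ σb s * Q) := by
    rw [zetaNum_split, map_mul, map_mul]; ring
  have hden : zetaDen K (r+s)
      = crossDen K r s * embL K r s (zetaDen K r) * embR K r s (zetaDen K s) := by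
    rw [zetaDen_split]; ring
  have hW : toF K (r+s) (zetaNum K σ σb (r+s) * (embL K r s P * embR K r s Q)) /
        toF K (r+s) (zetaDen K (r+s))
      = (toF K (r+s) (crossNum K σ σb r s) / toF K (r+s) (crossDen K r s))
          * (toF K (r+s) (embL K r s (zetaNum K σ σb r * P)) /
              toF K (r+s) (embL K r s (zetaDen K r)))
          * (toF K (r+s) (embR K r s (zetaNum K σ σb s * Q)) /
              toF K (r+s) (embR K r s (zetaDen K s))) := by
    rw [hnum, hden, div_mul_div_comm, div_mul_div_comm, ← map_mul, ← map_mul, ← map_mul,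
      ← map_mul]
  rw [Psi_eq_sum, hW]
  set H : Subgroup (Equiv.Perm (Fin (r+s))) := (iotaR r s).range with hH
  set C : FracLaur K (r+s) :=
    toF K (r+s) (crossNum K σ σb r s) / toF K (r+s) (crossDen K r s) with hC
  set G : FracLaur K (r+s) :=
    toF K (r+s) (embL K r s (zetaNum K σ σb r * P)) /
      toF K (r+s) (embL K r s (zetaDen K r)) with hG
  set ER : FracLaur K (r+s) := toF K (r+s) (embR K r s (zetaNum K σ σb s * Q)) /
      toF K (r+s) (embR K r s (zetaDen K s)) with hER
  have key : ∀ q : Equiv.Perm (Fin (r+s)) ⧸ H,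
      ∑ γ ∈ univ.filter (fun γ => (QuotientGroup.mk γ : _ ⧸ H) = q),
        permFrac K γ (C * G * ER) = 0 := by
    intro q
    have hbij : ∑ γ ∈ univ.filter (fun γ => (QuotientGroup.mk γ : _ ⧸ H) = q),
          permFrac K γ (C * G * ER)
        = ∑ β : Equiv.Perm (Fin s), permFrac K (q.out * iotaR r s β) (C * G * ER) := by
      refine (Finset.sum_bij (fun β _ => q.out * iotaR r s β) ?_ ?_ ?_ ?_).symm
      · intro β _
        simp only [Finset.mem_filter, Finset.mem_univ, true_and]
        rw [QuotientGroup.mk_mul_of_mem q.out (MonoidHom.mem_range.mpr ⟨β, rfl⟩),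
          QuotientGroup.out_eq']
      · intro α _ β _ h
        exact iotaR_injective r s (mul_left_cancel h)
      · intro γ hγ
        simp only [Finset.mem_filter, Finset.mem_univ, true_and] at hγ
        have hq : (QuotientGroup.mk q.out : _ ⧸ H) = QuotientGroup.mk γ := by
          rw [QuotientGroup.out_eq', hγ]
        obtain ⟨β, hβ⟩ := MonoidHom.mem_range.mp (QuotientGroup.eq.mp hq)
        refine ⟨β, Finset.mem_univ β, ?_⟩
        show q.out * iotaR r s β = γ
        rw [hβ, mul_inv_cancel_left]
      · intro β _; rfl
    rw [hbij]
    have hterm : ∀ β : Equiv.Perm (Fin s),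
        permFrac K (q.out * iotaR r s β) (C * G * ER)
          = permFrac K q.out (C * G *
              (toF K (r+s) (embR K r s (permLaur K β (zetaNum K σ σb s * Q))) /
                toF K (r+s) (embR K r s (permLaur K β (zetaDen K s))))) := by
      intro β
      rw [← permFrac_permFrac]
      congr 1
      rw [map_mul, map_mul]
      congr 1
      · refine congrArg₂ (· * ·) ?_ ?_
        · rw [hC, map_div₀, permFrac_toF, permFrac_toF, permLaur_iotaR_crossNum,
            permLaur_iotaR_crossDen]
        · rw [hG, map_div₀, permFrac_toF, permFrac_toF, permLaur_iotaR_embL,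
            permLaur_iotaR_embL]
      · rw [hER, map_div₀, permFrac_toF, permFrac_toF, permLaur_iotaR_embR,
          permLaur_iotaR_embR]
    calc ∑ β : Equiv.Perm (Fin s), permFrac K (q.out * iotaR r s β) (C * G * ER)
        = ∑ β : Equiv.Perm (Fin s), permFrac K q.out (C * G *
            (toF K (r+s) (embR K r s (permLaur K β (zetaNum K σ σb s * Q))) /
              toF K (r+s) (embR K r s (permLaur K β (zetaDen K s))))) :=
          Finset.sum_congr rfl fun β _ => hterm β
      _ = permFrac K q.out (C * G * eR K r s (Psi K σ σb s Q)) := by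
          rw [← map_sum (permFrac K q.out), ← Finset.mul_sum]
          congr 2
          rw [Psi, map_sum (eR K r s)]
          refine Finset.sum_congr rfl fun β _ => ?_
          rw [map_div₀, eR_toF, eR_toF]
      _ = 0 := by rw [hQ, map_zero, mul_zero, map_zero]
  calc ∑ γ : Equiv.Perm (Fin (r+s)), permFrac K γ (C * G * ER)
      = ∑ q ∈ (univ : Finset (Equiv.Perm (Fin (r+s)) ⧸ H)),
          ∑ γ ∈ univ.filter (fun γ => (QuotientGroup.mk γ : _ ⧸ H) = q),
            permFrac K γ (C * G * ER) := by
        rw [Finset.sum_fiberwise_eq_sum_filter]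
        rw [Finset.filter_true_of_mem (fun γ _ => Finset.mem_univ _)]
    _ = 0 := by
        rw [Finset.sum_congr rfl fun q _ => key q]
        simp


/-- `Ψ_r` as a `K`-linear map. -/
noncomputable def psiLin (σ σb : K) (r : ℕ) : Laur K r →ₗ[K] FracLaur K r where
  toFun := Psi K σ σb r
  map_add' P Q := by
    simp only [Psi, mul_add, map_add, add_div, Finset.sum_add_distrib]
  map_smul' c P := by
    simp only [Psi, RingHom.id_apply, Finset.smul_sum]
    refine Finset.sum_congr rfl fun γ _ => ?_
    rw [mul_smul_comm, map_smul, Algebra.smul_def, map_mul, ← IsScalarTower.algebraMap_apply,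
      ← Algebra.smul_def, smul_div_assoc]

@[simp] lemma psiLin_apply (σ σb : K) (r : ℕ) (P : Laur K r) :
    psiLin K σ σb r P = Psi K σ σb r P := rfl

/-- `Ψ_r` as a `K`-linear map into `A_r`. -/
noncomputable def psiElLin (σ σb : K) (r : ℕ) : Laur K r →ₗ[K] Amod K σ σb r where
  toFun := psiEl K σ σb r
  map_add' P Q := Subtype.ext ((psiLin K σ σb r).map_add P Q)
  map_smul' c P := Subtype.ext ((psiLin K σ σb r).map_smul c P)

@[simp] lemma psiElLin_apply (σ σb : K) (r : ℕ) (P : Laur K r) :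
    psiElLin K σ σb r P = psiEl K σ σb r P := rfl

lemma Amod_eq_range (σ σb : K) (r : ℕ) :
    Amod K σ σb r = LinearMap.range (psiLin K σ σb r) := by
  apply le_antisymm
  · rw [Amod]
    refine Submodule.span_le.mpr ?_
    rintro x ⟨P, rfl⟩
    exact ⟨P, rfl⟩
  · rintro x ⟨P, rfl⟩
    exact Submodule.subset_span ⟨P, rfl⟩

/-- Descend a linear map killing `ker Ψ_r` to `A_r`. -/
noncomputable def descend (σ σb : K) (r : ℕ) {V : Type} [AddCommGroup V] [Module K V]
    (φ : Laur K r →ₗ[K] V) (h : LinearMap.ker (psiLin K σ σb r) ≤ LinearMap.ker φ) :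
    Amod K σ σb r →ₗ[K] V :=
  ((LinearMap.ker (psiLin K σ σb r)).liftQ φ h) ∘ₗ
    ((LinearMap.quotKerEquivRange (psiLin K σ σb r)).symm.toLinearMap ∘ₗ
      (LinearEquiv.ofEq _ _ (Amod_eq_range K σ σb r)).toLinearMap)

lemma descend_psiEl (σ σb : K) (r : ℕ) {V : Type} [AddCommGroup V] [Module K V]
    (φ : Laur K r →ₗ[K] V) (h : LinearMap.ker (psiLin K σ σb r) ≤ LinearMap.ker φ)
    (P : Laur K r) :
    descend K σ σb r φ h (psiEl K σ σb r P) = φ P := by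
  have h1 : (LinearEquiv.ofEq _ _ (Amod_eq_range K σ σb r)) (psiEl K σ σb r P)
      = (⟨Psi K σ σb r P, ⟨P, rfl⟩⟩ : LinearMap.range (psiLin K σ σb r)) := rfl
  have h2 : (LinearMap.quotKerEquivRange (psiLin K σ σb r)).symm
        (⟨Psi K σ σb r P, ⟨P, rfl⟩⟩ : LinearMap.range (psiLin K σ σb r))
      = Submodule.Quotient.mk P := by
    apply (LinearMap.quotKerEquivRange (psiLin K σ σb r)).injective
    rw [LinearEquiv.apply_symm_apply]
    refine Subtype.ext ?_
    show psiLin K σ σb r P = _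
    exact (LinearMap.quotKerEquivRange_apply_mk _ _).symm
  show ((LinearMap.ker (psiLin K σ σb r)).liftQ φ h)
      ((LinearMap.quotKerEquivRange (psiLin K σ σb r)).symm
        ((LinearEquiv.ofEq _ _ (Amod_eq_range K σ σb r)) (psiEl K σ σb r P))) = φ P
  rw [h1, h2, Submodule.liftQ_apply]

/-- The bilinear map `(P, Q) ↦ Ψ_{r+s}(P·Q(z_{r+1},…))`. -/
noncomputable def mulAux (σ σb : K) (r s : ℕ) :
    Laur K r →ₗ[K] Laur K s →ₗ[K] Amod K σ σb (r+s) :=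
  LinearMap.mk₂ K (fun P Q => psiElLin K σ σb (r+s) (embL K r s P * embR K r s Q))
    (fun P P' Q => by rw [map_add, add_mul, map_add])
    (fun c P Q => by rw [map_smul, smul_mul_assoc, map_smul])
    (fun P Q Q' => by rw [map_add, mul_add, map_add])
    (fun c P Q => by rw [map_smul, mul_smul_comm, map_smul])

lemma mulAux_apply (σ σb : K) (r s : ℕ) (P : Laur K r) (Q : Laur K s) :
    mulAux K σ σb r s P Q = psiEl K σ σb (r+s) (embL K r s P * embR K r s Q) := rfl

/-- First descent of `mulAux`. -/
noncomputable def mulStep1 (σ σb : K) (r s : ℕ) :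
    Amod K σ σb r →ₗ[K] Laur K s →ₗ[K] Amod K σ σb (r+s) :=
  descend K σ σb r (V := Laur K s →ₗ[K] Amod K σ σb (r+s)) (mulAux K σ σb r s) (by
    intro P hP
    rw [LinearMap.mem_ker] at hP ⊢
    apply LinearMap.ext
    intro Q
    refine Subtype.ext ?_
    show Psi K σ σb (r+s) (embL K r s P * embR K r s Q) = 0
    exact Psi_kernel_left K σ σb r s P Q hP)

lemma mulStep1_psiEl (σ σb : K) (r s : ℕ) (P : Laur K r) :
    mulStep1 K σ σb r s (psiEl K σ σb r P) = mulAux K σ σb r s P := by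
  unfold mulStep1
  exact descend_psiEl K σ σb r _ _ P

/-- Second descent of `mulAux`. -/
noncomputable def mulStep2 (σ σb : K) (r s : ℕ) :
    Amod K σ σb s →ₗ[K] Amod K σ σb r →ₗ[K] Amod K σ σb (r+s) :=
  descend K σ σb s (V := Amod K σ σb r →ₗ[K] Amod K σ σb (r+s)) ((mulStep1 K σ σb r s).flip) (by
    intro Q hQ
    rw [LinearMap.mem_ker] at hQ ⊢
    apply LinearMap.ext
    rintro ⟨x, hx⟩
    show mulStep1 K σ σb r s ⟨x, hx⟩ Q = 0
    induction hx using Submodule.span_induction with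
    | mem x h =>
        obtain ⟨P, rfl⟩ := h
        have : (⟨Psi K σ σb r P, Submodule.subset_span ⟨P, rfl⟩⟩ : Amod K σ σb r)
            = psiEl K σ σb r P := rfl
        rw [this, mulStep1_psiEl]
        refine Subtype.ext ?_
        show Psi K σ σb (r+s) (embL K r s P * embR K r s Q) = 0
        exact Psi_kernel_right K σ σb r s P Q hQ
    | zero =>
        have : (⟨(0 : FracLaur K r), Submodule.zero_mem _⟩ : Amod K σ σb r) = 0 := rfl
        rw [this, map_zero]
        rfl
    | add x y hx hy ihx ihy =>
        have : (⟨x + y, Submodule.add_mem _ hx hy⟩ : Amod K σ σb r)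
            = ⟨x, hx⟩ + ⟨y, hy⟩ := rfl
        rw [this, map_add]
        simp only [LinearMap.add_apply]
        rw [ihx, ihy, add_zero]
    | smul c x hx ihx =>
        have : (⟨c • x, Submodule.smul_mem _ c hx⟩ : Amod K σ σb r)
            = c • (⟨x, hx⟩ : Amod K σ σb r) := rfl
        rw [this, map_smul]
        simp only [LinearMap.smul_apply]
        rw [ihx, smul_zero])

lemma mulStep2_psiEl (σ σb : K) (r s : ℕ) (Q : Laur K s) :
    mulStep2 K σ σb r s (psiEl K σ σb s Q) = (mulStep1 K σ σb r s).flip Q := by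
  unfold mulStep2
  exact descend_psiEl K σ σb s _ _ Q

/-- The multiplication map `m_{r,s}`. -/
noncomputable def mulMap (σ σb : K) (r s : ℕ) :
    Amod K σ σb r ⊗[K] Amod K σ σb s →ₗ[K] Amod K σ σb (r+s) :=
  TensorProduct.lift (mulStep2 K σ σb r s).flip

lemma mulMap_prop (σ σb : K) (r s : ℕ) : MulProp K σ σb r s (mulMap K σ σb r s) := by
  intro P Q
  show TensorProduct.lift (mulStep2 K σ σb r s).flip
      (psiEl K σ σb r P ⊗ₜ[K] psiEl K σ σb s Q) = _
  rw [TensorProduct.lift.tmul]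
  show mulStep2 K σ σb r s (psiEl K σ σb s Q) (psiEl K σ σb r P) = _
  rw [mulStep2_psiEl]
  show mulStep1 K σ σb r s (psiEl K σ σb r P) Q = _
  rw [mulStep1_psiEl]
  rfl

lemma mulMap_unique (σ σb : K) (r s : ℕ)
    (m' : Amod K σ σb r ⊗[K] Amod K σ σb s →ₗ[K] Amod K σ σb (r+s))
    (h' : MulProp K σ σb r s m') : m' = mulMap K σ σb r s := by
  apply TensorProduct.ext'
  rintro ⟨x, hx⟩ ⟨y, hy⟩
  induction hx using Submodule.span_induction with
  | mem x h =>
      obtain ⟨P, rfl⟩ := h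
      induction hy using Submodule.span_induction with
      | mem y h2 =>
          obtain ⟨Q, rfl⟩ := h2
          have e1 : (⟨Psi K σ σb r P, Submodule.subset_span ⟨P, rfl⟩⟩ : Amod K σ σb r)
              = psiEl K σ σb r P := rfl
          have e2 : (⟨Psi K σ σb s Q, Submodule.subset_span ⟨Q, rfl⟩⟩ : Amod K σ σb s)
              = psiEl K σ σb s Q := rfl
          rw [e1, e2, h' P Q, mulMap_prop K σ σb r s P Q]
      | zero =>
          have : (⟨(0 : FracLaur K s), Submodule.zero_mem _⟩ : Amod K σ σb s) = 0 := rfl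
          rw [this, TensorProduct.tmul_zero, map_zero, map_zero]
      | add y z hy hz ihy ihz =>
          have : (⟨y + z, Submodule.add_mem _ hy hz⟩ : Amod K σ σb s)
              = ⟨y, hy⟩ + ⟨z, hz⟩ := rfl
          rw [this, TensorProduct.tmul_add, map_add, map_add, ihy, ihz]
      | smul c y hy ihy =>
          have : (⟨c • y, Submodule.smul_mem _ c hy⟩ : Amod K σ σb s)
              = c • (⟨y, hy⟩ : Amod K σ σb s) := rfl
          rw [this, TensorProduct.tmul_smul, map_smul, map_smul, ihy]
  | zero =>
      have : (⟨(0 : FracLaur K r), Submodule.zero_mem _⟩ : Amod K σ σb r) = 0 := rfl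
      rw [this, TensorProduct.zero_tmul, map_zero, map_zero]
  | add x y hx hy ihx ihy =>
      have : (⟨x + y, Submodule.add_mem _ hx hy⟩ : Amod K σ σb r)
          = ⟨x, hx⟩ + ⟨y, hy⟩ := rfl
      rw [this, TensorProduct.add_tmul, map_add, map_add, ihx, ihy]
  | smul c x hx ihx =>
      have : (⟨c • x, Submodule.smul_mem _ c hx⟩ : Amod K σ σb r)
          = c • (⟨x, hx⟩ : Amod K σ σb r) := rfl
      rw [this, ← TensorProduct.smul_tmul', map_smul, map_smul, ihx]


/-- Reindexing of exponent vectors along an equality of dimensions. -/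
def castExp {n m : ℕ} (h : n = m) : (Fin n → ℤ) ≃+ (Fin m → ℤ) where
  toFun v := v ∘ Fin.cast h.symm
  invFun v := v ∘ Fin.cast h
  left_inv v := by funext i; exact congrArg v (Fin.ext (by simp))
  right_inv v := by funext i; exact congrArg v (Fin.ext (by simp))
  map_add' v w := rfl

/-- Reindexing of Laurent polynomials along an equality of dimensions. -/
noncomputable def castLaur {n m : ℕ} (h : n = m) : Laur K n ≃ₐ[K] Laur K m :=
  AddMonoidAlgebra.domCongr K K (castExp h)

lemma castLaur_mono {n m : ℕ} (h : n = m) (v : Fin n → ℤ) :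
    castLaur K h (mono K v) = mono K (castExp h v) :=
  AddMonoidAlgebra.domCongr_single _ _ _

lemma castLaur_heq {n m : ℕ} (h : n = m) (X : Laur K n) : HEq X (castLaur K h X) := by
  subst h
  have he : castExp (rfl : n = n) = AddEquiv.refl (Fin n → ℤ) := by
    apply AddEquiv.ext
    intro v
    show v ∘ Fin.cast rfl = v
    funext i
    exact congrArg v (Fin.ext (by simp))
  rw [castLaur, he, AddMonoidAlgebra.domCongr_refl]
  exact heq_of_eq rfl

lemma castExp_extLL (r s t : ℕ) (u : Fin r → ℤ) :
    castExp (Nat.add_assoc r s t) (extL (r+s) t (extL r s u)) = extL r (s+t) u := by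
  funext k
  simp only [castExp, AddEquiv.coe_mk, Equiv.coe_fn_mk, Function.comp_apply, extL,
    AddMonoidHom.coe_mk, ZeroHom.coe_mk, Fin.coe_cast]
  split_ifs <;> first | rfl | omega

lemma castExp_extLR (r s t : ℕ) (v : Fin s → ℤ) :
    castExp (Nat.add_assoc r s t) (extL (r+s) t (extR r s v))
      = extR r (s+t) (extL s t v) := by
  funext k
  simp only [castExp, AddEquiv.coe_mk, Equiv.coe_fn_mk, Function.comp_apply, extL, extR,
    AddMonoidHom.coe_mk, ZeroHom.coe_mk, Fin.coe_cast]
  split_ifs <;> first | rfl | omega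

lemma castExp_extRR (r s t : ℕ) (w : Fin t → ℤ) :
    castExp (Nat.add_assoc r s t) (extR (r+s) t w)
      = extR r (s+t) (extR s t w) := by
  funext k
  simp only [castExp, AddEquiv.coe_mk, Equiv.coe_fn_mk, Function.comp_apply, extR,
    AddMonoidHom.coe_mk, ZeroHom.coe_mk, Fin.coe_cast]
  split_ifs <;> first | rfl | omega | (exact congrArg w (Fin.ext (by simp; omega)))

lemma castLaur_embLL (r s t : ℕ) (P : Laur K r) :
    castLaur K (Nat.add_assoc r s t) (embL K (r+s) t (embL K r s P)) = embL K r (s+t) P := by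
  have h : (castLaur K (Nat.add_assoc r s t)).toAlgHom.comp
        ((embL K (r+s) t).comp (embL K r s)) = embL K r (s+t) := by
    refine AddMonoidAlgebra.algHom_ext ?_ (Subsingleton.elim _ _)
    intro v
    show castLaur K (Nat.add_assoc r s t) (embL K (r+s) t (embL K r s (mono K v))) = _
    rw [embL_mono, embL_mono, castLaur_mono, castExp_extLL]
    exact (embL_mono K r (s+t) v).symm
  exact DFunLike.congr_fun h P

lemma castLaur_embLR (r s t : ℕ) (Q : Laur K s) :
    castLaur K (Nat.add_assoc r s t) (embL K (r+s) t (embR K r s Q))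
      = embR K r (s+t) (embL K s t Q) := by
  have h : (castLaur K (Nat.add_assoc r s t)).toAlgHom.comp
        ((embL K (r+s) t).comp (embR K r s))
      = (embR K r (s+t)).comp (embL K s t) := by
    refine AddMonoidAlgebra.algHom_ext ?_ (Subsingleton.elim _ _)
    intro v
    show castLaur K (Nat.add_assoc r s t) (embL K (r+s) t (embR K r s (mono K v))) = _
    rw [embR_mono, embL_mono, castLaur_mono, castExp_extLR]
    show _ = embR K r (s+t) (embL K s t (mono K v))
    rw [embL_mono, embR_mono]
  exact DFunLike.congr_fun h Q

lemma castLaur_embRR (r s t : ℕ) (R : Laur K t) :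
    castLaur K (Nat.add_assoc r s t) (embR K (r+s) t R)
      = embR K r (s+t) (embR K s t R) := by
  have h : (castLaur K (Nat.add_assoc r s t)).toAlgHom.comp (embR K (r+s) t)
      = (embR K r (s+t)).comp (embR K s t) := by
    refine AddMonoidAlgebra.algHom_ext ?_ (Subsingleton.elim _ _)
    intro v
    show castLaur K (Nat.add_assoc r s t) (embR K (r+s) t (mono K v)) = _
    rw [embR_mono, castLaur_mono, castExp_extRR]
    show _ = embR K r (s+t) (embR K s t (mono K v))
    rw [embR_mono, embR_mono]
  exact DFunLike.congr_fun h R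

lemma assoc_poly (r s t : ℕ) (P : Laur K r) (Q : Laur K s) (R : Laur K t) :
    castLaur K (Nat.add_assoc r s t)
        (embL K (r+s) t (embL K r s P * embR K r s Q) * embR K (r+s) t R)
      = embL K r (s+t) P * embR K r (s+t) (embL K s t Q * embR K s t R) := by
  rw [map_mul, map_mul, map_mul, castLaur_embLL, castLaur_embLR, castLaur_embRR,
    map_mul (embR K r (s+t)), mul_assoc]

lemma psiEl_congr_heq (σ σb : K) {n m : ℕ} (h : n = m) {X : Laur K n} {Y : Laur K m}
    (hXY : HEq X Y) : HEq (psiEl K σ σb n X) (psiEl K σ σb m Y) := by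
  subst h
  rw [eq_of_heq hXY]


end ShuffleDev

/-- There exists a unique `K`-linear map `m_{r,s} : A_r ⊗ A_s → A_{r+s}` with
`m_{r,s}(Ψ_r(P) ⊗ Ψ_s(Q)) = Ψ_{r+s}(P·Q(z_{r+1},…))`, and any family of such maps is
associative, i.e. endows `A = K ⊕ ⊕_{r≥1} A_r` with the structure of an associative
graded algebra.  (Associativity is stated via `HEq` because of the grading
`(r+s)+t = r+(s+t)`.) -/
theorem shuffle_algebra_structure (K : Type) [Field K] (σ σb : K)
    (hσ : σ ≠ 0) (hσb : σb ≠ 0) :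
    (∀ r s : ℕ, ∃! m : Amod K σ σb r ⊗[K] Amod K σ σb s →ₗ[K] Amod K σ σb (r + s),
        MulProp K σ σb r s m) ∧
    (∀ m : ∀ r s : ℕ, Amod K σ σb r ⊗[K] Amod K σ σb s →ₗ[K] Amod K σ σb (r + s),
      (∀ r s, MulProp K σ σb r s (m r s)) →
      ∀ (r s t : ℕ) (P : Laur K r) (Q : Laur K s) (R : Laur K t),
        HEq (m (r + s) t
              ((m r s (psiEl K σ σb r P ⊗ₜ[K] psiEl K σ σb s Q)) ⊗ₜ[K] psiEl K σ σb t R))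
            (m r (s + t)
              (psiEl K σ σb r P ⊗ₜ[K]
                (m s t (psiEl K σ σb s Q ⊗ₜ[K] psiEl K σ σb t R))))) := by
  constructor
  · intro r s
    exact ⟨mulMap K σ σb r s, mulMap_prop K σ σb r s,
      fun m' hm' => mulMap_unique K σ σb r s m' hm'⟩
  · intro m hm r s t P Q R
    rw [hm r s P Q, hm (r+s) t (embL K r s P * embR K r s Q) R,
      hm s t Q R, hm r (s+t) P (embL K s t Q * embR K s t R)]
    exact psiEl_congr_heq K σ σb (Nat.add_assoc r s t)
      ((castLaur_heq K (Nat.add_assoc r s t) _).trans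
        (heq_of_eq (assoc_poly K r s t P Q R)))
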